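/- Let S be a numerical semigroup and suppose (a_0,…,a_g) and (a'_0,…,a'_g) are two arrangements of the same positive integers (one is a permutation of the other) such that S = ⟨a_0,…,a_g⟩ is free for both arrangements; let n_i (resp. n'_i) be the quotients e_{i-1}/e_i computed from the first (resp. second) arrangement. Then the multisets {n_1·a_1, n_2·a_2, …, n_g·a_g} and {n'_1·a'_1, n'_2·a'_2, …, n'_g·a'_g} are equal. -/

import Mathlib

/-- `eSeq a i = gcd(a 0, …, a i)`. -/
def eSeq (a : ℕ → ℕ) : ℕ → ℕ
  | 0 => a 0
  | i + 1 => Nat.gcd (eSeq a i) (a (i + 1))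

/-- `nSeq a i = e_{i-1} / e_i` (intended for `1 ≤ i`). -/
def nSeq (a : ℕ → ℕ) (i : ℕ) : ℕ := eSeq a (i - 1) / eSeq a i

/-- `gen a i = ⟨a 0, …, a i⟩`, the set of all ℕ-linear combinations. -/
def gen (a : ℕ → ℕ) (i : ℕ) : Set ℕ :=
  {s | ∃ c : ℕ → ℕ, s = ∑ j ∈ Finset.range (i + 1), c j * a j}

/-- The semigroup `S = ⟨a 0, …, a g⟩` is free for the arrangement `(a 0, …, a g)`. -/
def IsFreeArr (a : ℕ → ℕ) (g : ℕ) : Prop :=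
  eSeq a g = 1 ∧ ∀ i, 1 ≤ i → i ≤ g → nSeq a i * a i ∈ gen a (i - 1)


section basics
variable (a : ℕ → ℕ)

lemma eSeq_pos (h : 0 < a 0) : ∀ g, 0 < eSeq a g
  | 0 => h
  | g + 1 => Nat.gcd_pos_of_pos_left _ (eSeq_pos h g)

lemma eSeq_succ_dvd (g : ℕ) : eSeq a (g + 1) ∣ eSeq a g := Nat.gcd_dvd_left _ _

lemma eSeq_succ_dvd_a (g : ℕ) : eSeq a (g + 1) ∣ a (g + 1) := Nat.gcd_dvd_right _ _

lemma eSeq_dvd_a : ∀ {g i : ℕ}, i ≤ g → eSeq a g ∣ a i := by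
  intro g
  induction g with
  | zero => intro i hi; interval_cases i; exact dvd_rfl
  | succ g ih =>
    intro i hi
    rcases Nat.lt_or_ge i (g+1) with h | h
    · exact (eSeq_succ_dvd a g).trans (ih (by omega))
    · have : i = g + 1 := by omega
      subst this; exact eSeq_succ_dvd_a a g

lemma nSeq_mul_eSeq (g : ℕ) : nSeq a (g + 1) * eSeq a (g + 1) = eSeq a g := by
  simpa [nSeq] using Nat.div_mul_cancel (eSeq_succ_dvd a g)

lemma nSeq_pos (h : 0 < a 0) (g : ℕ) : 0 < nSeq a (g + 1) := by
  have := nSeq_mul_eSeq a g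
  have h1 := eSeq_pos a h g
  rcases Nat.eq_zero_or_pos (nSeq a (g+1)) with hn | hn
  · rw [hn, zero_mul] at this; omega
  · exact hn

lemma zero_mem_gen (g : ℕ) : 0 ∈ gen a g := ⟨fun _ => 0, by simp⟩

lemma add_mem_gen {g s t : ℕ} (hs : s ∈ gen a g) (ht : t ∈ gen a g) : s + t ∈ gen a g := by
  obtain ⟨c, rfl⟩ := hs; obtain ⟨d, rfl⟩ := ht
  exact ⟨fun j => c j + d j, by rw [← Finset.sum_add_distrib]; exact Finset.sum_congr rfl (by intros; ring)⟩

lemma nsmul_mem_gen {g s : ℕ} (k : ℕ) (hs : s ∈ gen a g) : k * s ∈ gen a g := by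
  obtain ⟨c, rfl⟩ := hs
  exact ⟨fun j => k * c j, by rw [Finset.mul_sum]; exact Finset.sum_congr rfl (by intros; ring)⟩

lemma mul_a_mem_gen {g i : ℕ} (hi : i ≤ g) (k : ℕ) : k * a i ∈ gen a g := by
  refine ⟨fun j => if j = i then k else 0, ?_⟩
  rw [Finset.sum_eq_single i]
  · simp
  · intro b _ hb; simp [hb]
  · intro h; exact absurd (Finset.mem_range.mpr (by omega)) h

lemma eSeq_dvd_of_mem_gen {g s : ℕ} (hs : s ∈ gen a g) : eSeq a g ∣ s := by
  obtain ⟨c, rfl⟩ := hs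
  exact Finset.dvd_sum fun j hj => Dvd.dvd.mul_left (eSeq_dvd_a a (by simpa [Nat.lt_succ_iff] using hj)) _

lemma mem_gen_succ {g s : ℕ} (hs : s ∈ gen a (g + 1)) :
    ∃ t ∈ gen a g, ∃ d : ℕ, s = t + d * a (g + 1) := by
  obtain ⟨c, rfl⟩ := hs
  rw [Finset.sum_range_succ]
  exact ⟨_, ⟨c, rfl⟩, c (g+1), rfl⟩

lemma gen_succ_of_mem {g t : ℕ} (ht : t ∈ gen a g) (d : ℕ) : t + d * a (g + 1) ∈ gen a (g + 1) := by
  obtain ⟨c, rfl⟩ := ht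
  refine ⟨fun j => if j = g + 1 then d else c j, ?_⟩
  have h2 : ∀ j ∈ Finset.range (g+1), (if j = g+1 then d else c j) * a j = c j * a j := by
    intro j hj
    have : j ≠ g + 1 := by simp only [Finset.mem_range] at hj; omega
    simp [this]
  beta_reduce
  conv_rhs => rw [Finset.sum_range_succ, Finset.sum_congr rfl h2]
  simp

end basics

section reps
variable (a : ℕ → ℕ)

lemma rep_unique_le {g N c₁ c₂ : ℕ} (h0 : 0 < a 0) (hle : c₂ ≤ c₁)
    (hc₁ : c₁ < nSeq a (g + 1))
    (hle₁ : c₁ * a (g + 1) ≤ N)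
    (hm₁ : N - c₁ * a (g + 1) ∈ gen a g) (hm₂ : N - c₂ * a (g + 1) ∈ gen a g) : c₁ = c₂ := by
  set A := a (g + 1) with hA
  set e := eSeq a g with he
  set e' := eSeq a (g + 1) with he'
  have hgcd : e' = Nat.gcd e A := rfl
  have hd1 : e ∣ N - c₁ * A := eSeq_dvd_of_mem_gen a hm₁
  have hd2 : e ∣ N - c₂ * A := eSeq_dvd_of_mem_gen a hm₂
  have hsub : (N - c₂ * A) - (N - c₁ * A) = (c₁ - c₂) * A := by
    have : (c₁ - c₂) * A = c₁ * A - c₂ * A := Nat.sub_mul c₁ c₂ A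
    have h2 : c₂ * A ≤ c₁ * A := Nat.mul_le_mul_right A hle
    omega
  have hdk : e ∣ (c₁ - c₂) * A := hsub ▸ Nat.dvd_sub hd2 hd1
  have hepos : 0 < e' := eSeq_pos a h0 (g + 1)
  have hgcdpos : 0 < Nat.gcd e A := hgcd ▸ hepos
  have hco : Nat.Coprime (e / Nat.gcd e A) (A / Nat.gcd e A) := Nat.coprime_div_gcd_div_gcd hgcdpos
  have hn_eq : nSeq a (g + 1) = e / Nat.gcd e A := rfl
  have hAe : A / Nat.gcd e A * Nat.gcd e A = A := Nat.div_mul_cancel (Nat.gcd_dvd_right e A)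
  have hne : nSeq a (g + 1) * Nat.gcd e A = e := by
    rw [hn_eq]; exact Nat.div_mul_cancel (Nat.gcd_dvd_left e A)
  -- e ∣ (c₁ - c₂) * A  ⇒  n ∣ (c₁ - c₂)
  have hdvd : nSeq a (g + 1) ∣ (c₁ - c₂) := by
    have h1 : nSeq a (g + 1) * Nat.gcd e A ∣ ((c₁ - c₂) * (A / Nat.gcd e A)) * Nat.gcd e A := by
      rw [hne, mul_assoc, hAe]; exact hdk
    have h2 : nSeq a (g + 1) ∣ (c₁ - c₂) * (A / Nat.gcd e A) :=
      (Nat.mul_dvd_mul_iff_right hgcdpos).mp h1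
    exact (Nat.Coprime.dvd_of_dvd_mul_right (hn_eq ▸ hco) h2)
  have hlt : c₁ - c₂ < nSeq a (g + 1) := by omega
  have hz : c₁ - c₂ = 0 := Nat.eq_zero_of_dvd_of_lt hdvd hlt
  omega

lemma rep_unique {g N c₁ c₂ : ℕ} (h0 : 0 < a 0)
    (hc₁ : c₁ < nSeq a (g + 1)) (hc₂ : c₂ < nSeq a (g + 1))
    (hle₁ : c₁ * a (g + 1) ≤ N) (hle₂ : c₂ * a (g + 1) ≤ N)
    (hm₁ : N - c₁ * a (g + 1) ∈ gen a g) (hm₂ : N - c₂ * a (g + 1) ∈ gen a g) : c₁ = c₂ := by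
  rcases le_total c₂ c₁ with h | h
  · exact rep_unique_le a h0 h hc₁ hle₁ hm₁ hm₂
  · exact (rep_unique_le a h0 h hc₂ hle₂ hm₂ hm₁).symm

lemma exists_rep {g N : ℕ} (h0 : 0 < a 0) (hfree : nSeq a (g + 1) * a (g + 1) ∈ gen a g)
    (hN : N ∈ gen a (g + 1)) :
    ∃ r, r < nSeq a (g + 1) ∧ r * a (g + 1) ≤ N ∧ N - r * a (g + 1) ∈ gen a g := by
  obtain ⟨t, ht, d, rfl⟩ := mem_gen_succ a hN
  set n := nSeq a (g + 1) with hn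
  have hnpos := nSeq_pos a h0 g
  obtain ⟨q, r, hr, rfl⟩ : ∃ q r, r < n ∧ d = n * q + r :=
    ⟨d / n, d % n, Nat.mod_lt _ hnpos, (Nat.div_add_mod d n).symm⟩
  have hAeq : (n * q + r) * a (g + 1) = q * (n * a (g + 1)) + r * a (g + 1) := by ring
  refine ⟨r, hr, by omega, ?_⟩
  have h2 : t + (n * q + r) * a (g + 1) - r * a (g + 1) = t + q * (n * a (g + 1)) := by omega
  rw [h2]
  exact add_mem_gen a ht (nsmul_mem_gen a q hfree)

lemma mem_gen_zero {s : ℕ} : s ∈ gen a 0 ↔ a 0 ∣ s := by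
  constructor
  · rintro ⟨c, rfl⟩; simp
  · rintro ⟨k, rfl⟩; exact ⟨fun _ => k, by simp [mul_comm]⟩

end reps

section series
open PowerSeries
open scoped Classical

noncomputable def Fs (a : ℕ → ℕ) (g : ℕ) : PowerSeries ℤ :=
  PowerSeries.mk fun s => if s ∈ gen a g then 1 else 0

variable (a : ℕ → ℕ)

lemma coeff_Fs (g N : ℕ) : coeff N (Fs a g) = if N ∈ gen a g then 1 else 0 :=
  coeff_mk N _

lemma geom_ps (n A : ℕ) :
    (∑ c ∈ Finset.range n, (X : PowerSeries ℤ) ^ (c * A)) * (1 - X ^ A) = 1 - X ^ (n * A) := by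
  have h := geom_sum_mul ((X : PowerSeries ℤ) ^ A) n
  have e1 : ∀ c ∈ Finset.range n, (X : PowerSeries ℤ) ^ (c * A) = ((X : PowerSeries ℤ) ^ A) ^ c :=
    fun c _ => by rw [← pow_mul, mul_comm]
  rw [Finset.sum_congr rfl e1]
  have e2 : (X : PowerSeries ℤ) ^ (n * A) = ((X : PowerSeries ℤ) ^ A) ^ n := by
    rw [← pow_mul, mul_comm]
  rw [e2]
  linear_combination -h

lemma Fs_zero_mul (h0 : 0 < a 0) : Fs a 0 * (1 - (X : PowerSeries ℤ) ^ (a 0)) = 1 := by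
  ext N
  rw [mul_sub, mul_one, map_sub, PowerSeries.coeff_mul_X_pow', coeff_Fs, coeff_Fs,
    PowerSeries.coeff_one]
  simp only [mem_gen_zero]
  rcases Nat.eq_zero_or_pos N with rfl | hN
  · have : ¬ a 0 ≤ 0 := by omega
    simp [this]
  · have hN0 : ¬ (N = 0) := by omega
    by_cases hle : a 0 ≤ N
    · have hiff : a 0 ∣ N ↔ a 0 ∣ N - a 0 := by
        constructor
        · intro h; exact Nat.dvd_sub h dvd_rfl
        · intro h
          have : N = (N - a 0) + a 0 := by omega
          rw [this]; exact dvd_add h dvd_rfl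
      by_cases hd : a 0 ∣ N
      · simp [hle, hd, hiff.mp hd, hN0]
      · have hd2 : ¬ a 0 ∣ N - a 0 := fun hh => hd (hiff.mpr hh)
        simp [hle, hd, hd2, hN0]
    · have hd : ¬ a 0 ∣ N := fun h => hle (Nat.le_of_dvd hN h)
      simp [hle, hd, hN0]

lemma Fs_succ (g : ℕ) (h0 : 0 < a 0) (hfree : nSeq a (g + 1) * a (g + 1) ∈ gen a g) :
    Fs a (g + 1) =
      Fs a g * ∑ c ∈ Finset.range (nSeq a (g + 1)), (X : PowerSeries ℤ) ^ (c * a (g + 1)) := by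
  ext N
  rw [Finset.mul_sum, map_sum, coeff_Fs]
  have hterm : ∀ c, coeff N (Fs a g * (X : PowerSeries ℤ) ^ (c * a (g + 1))) =
      if c * a (g + 1) ≤ N then (if N - c * a (g + 1) ∈ gen a g then (1:ℤ) else 0) else 0 := by
    intro c
    rw [PowerSeries.coeff_mul_X_pow', coeff_Fs]
  simp only [hterm]
  by_cases hN : N ∈ gen a (g + 1)
  · rw [if_pos hN]
    obtain ⟨r, hr, hrle, hrm⟩ := exists_rep a h0 hfree hN
    rw [Finset.sum_eq_single_of_mem r (Finset.mem_range.mpr hr)]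
    · rw [if_pos hrle, if_pos hrm]
    · intro c hc hne
      by_cases h1 : c * a (g + 1) ≤ N
      · rw [if_pos h1]
        by_cases h2 : N - c * a (g + 1) ∈ gen a g
        · exact absurd (rep_unique a h0 (Finset.mem_range.mp hc) hr h1 hrle h2 hrm) hne
        · rw [if_neg h2]
      · rw [if_neg h1]
  · rw [if_neg hN]
    refine (Finset.sum_eq_zero fun c _ => ?_).symm
    by_cases h1 : c * a (g + 1) ≤ N
    · rw [if_pos h1]
      by_cases h2 : N - c * a (g + 1) ∈ gen a g
      · exfalso
        have : N = (N - c * a (g + 1)) + c * a (g + 1) := by omega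
        exact hN (this ▸ gen_succ_of_mem a h2 c)
      · rw [if_neg h2]
    · rw [if_neg h1]

lemma Fs_prod (g : ℕ) (h0 : 0 < a 0)
    (hfree : ∀ i, 1 ≤ i → i ≤ g → nSeq a i * a i ∈ gen a (i - 1)) :
    Fs a g = Fs a 0 *
      ∏ i ∈ Finset.Icc 1 g, ∑ c ∈ Finset.range (nSeq a i), (X : PowerSeries ℤ) ^ (c * a i) := by
  induction g with
  | zero => simp
  | succ g ih =>
    rw [Finset.prod_Icc_succ_top (by omega : 1 ≤ g + 1), ← mul_assoc,
      ← ih (fun i h1 h2 => hfree i h1 (by omega))]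
    exact Fs_succ a g h0 (hfree (g + 1) (by omega) le_rfl)

lemma main_identity (g : ℕ) (hpos : ∀ i, i ≤ g → 0 < a i)
    (hfree : ∀ i, 1 ≤ i → i ≤ g → nSeq a i * a i ∈ gen a (i - 1)) :
    Fs a g * ∏ i ∈ Finset.range (g + 1), (1 - (X : PowerSeries ℤ) ^ (a i)) =
      ∏ i ∈ Finset.Icc 1 g, (1 - (X : PowerSeries ℤ) ^ (nSeq a i * a i)) := by
  have h0 : 0 < a 0 := hpos 0 (by omega)
  have hr : Finset.range (g + 1) = insert 0 (Finset.Icc 1 g) := by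
    ext x; simp only [Finset.mem_range, Finset.mem_insert, Finset.mem_Icc]; omega
  rw [Fs_prod a g h0 hfree, hr, Finset.prod_insert (by simp), mul_mul_mul_comm,
    Fs_zero_mul a h0, one_mul, ← Finset.prod_mul_distrib]
  exact Finset.prod_congr rfl fun i _ => geom_ps _ _

end series

section mult
open PowerSeries

noncomputable def pp (M : Multiset ℕ) : PowerSeries ℤ :=
  (M.map (fun m => 1 - (X : PowerSeries ℤ) ^ m)).prod

lemma pp_cons (x : ℕ) (M : Multiset ℕ) : pp (x ::ₘ M) = (1 - (X : PowerSeries ℤ) ^ x) * pp M := by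
  simp [pp]

lemma pp_zero : pp 0 = 1 := by simp [pp]

lemma constantCoeff_pp (M : Multiset ℕ) (h : ∀ x ∈ M, 0 < x) :
    constantCoeff (pp M) = 1 := by
  induction M using Multiset.induction with
  | empty => simp [pp]
  | cons x M ih =>
    rw [pp_cons, map_mul, ih (fun y hy => h y (Multiset.mem_cons_of_mem hy))]
    have hx : x ≠ 0 := (h x (Multiset.mem_cons_self x M)).ne'
    simp [hx]

lemma coeff_pp (m : ℕ) (hm : 0 < m) (M : Multiset ℕ) (h : ∀ x ∈ M, 0 < x ∧ m ≤ x) :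
    coeff m (pp M) = -(M.count m : ℤ) := by
  induction M using Multiset.induction with
  | empty => rw [pp_zero, PowerSeries.coeff_one, if_neg (by omega)]; simp
  | cons x M ih =>
    have hx := h x (Multiset.mem_cons_self x M)
    have hM : ∀ y ∈ M, 0 < y ∧ m ≤ y := fun y hy => h y (Multiset.mem_cons_of_mem hy)
    rw [pp_cons, mul_comm, mul_sub, mul_one, map_sub, PowerSeries.coeff_mul_X_pow',
      ih hM]
    rcases eq_or_lt_of_le hx.2 with rfl | hlt
    · rw [if_pos le_rfl, Nat.sub_self, coeff_zero_eq_constantCoeff,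
        constantCoeff_pp M (fun y hy => (hM y hy).1)]
      rw [Multiset.count_cons_self]
      push_cast; ring
    · rw [if_neg (by omega), Multiset.count_cons_of_ne (by omega)]
      ring

lemma one_sub_X_pow_ne_zero (m : ℕ) (hm : 0 < m) :
    (1 - (X : PowerSeries ℤ) ^ m) ≠ 0 := by
  intro h
  have := congrArg (constantCoeff (R := ℤ)) h
  simp [hm.ne'] at this

lemma pp_eq_one (M : Multiset ℕ) (h : ∀ x ∈ M, 0 < x) (hpp : pp M = 1) : M = 0 := by
  by_contra hne
  have hF : M.toFinset.Nonempty := by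
    obtain ⟨x, hx⟩ := Multiset.exists_mem_of_ne_zero hne
    exact ⟨x, Multiset.mem_toFinset.mpr hx⟩
  set m := M.toFinset.min' hF with hm
  have hmem : m ∈ M := Multiset.mem_toFinset.mp (M.toFinset.min'_mem hF)
  have hmpos : 0 < m := h m hmem
  have hall : ∀ x ∈ M, 0 < x ∧ m ≤ x := fun x hx =>
    ⟨h x hx, M.toFinset.min'_le x (Multiset.mem_toFinset.mpr hx)⟩
  have h1 := coeff_pp m hmpos M hall
  rw [hpp, PowerSeries.coeff_one, if_neg hmpos.ne'] at h1
  have : 0 < M.count m := Multiset.count_pos.mpr hmem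
  omega

lemma multiset_eq_of_pp_aux (k : ℕ) : ∀ (M M' : Multiset ℕ), Multiset.card M ≤ k →
    (∀ x ∈ M, 0 < x) → (∀ x ∈ M', 0 < x) → pp M = pp M' → M = M' := by
  induction k with
  | zero =>
    intro M M' hc h h' hpp
    have : M = 0 := Multiset.card_eq_zero.mp (by omega)
    subst this
    exact (pp_eq_one M' h' (by rw [← hpp, pp_zero])).symm
  | succ k ih =>
    intro M M' hc h h' hpp
    rcases eq_or_ne M 0 with rfl | hne
    · exact (pp_eq_one M' h' (by rw [← hpp, pp_zero])).symm
    have hS : (M + M') ≠ 0 := by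
      intro hz
      have := congrArg Multiset.card hz
      simp only [Multiset.card_add, Multiset.card_zero] at this
      exact hne (Multiset.card_eq_zero.mp (by omega))
    have hex := Multiset.exists_mem_of_ne_zero hS
    have hF : (M + M').toFinset.Nonempty :=
      ⟨hex.choose, Multiset.mem_toFinset.mpr hex.choose_spec⟩
    set m := (M + M').toFinset.min' hF with hmdef
    have hmem : m ∈ M + M' := Multiset.mem_toFinset.mp (Finset.min'_mem _ hF)
    have hple : ∀ x ∈ M + M', m ≤ x := fun x hx => Finset.min'_le _ x (Multiset.mem_toFinset.mpr hx)
    have hmpos : 0 < m := by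
      rcases Multiset.mem_add.mp hmem with h1 | h1
      · exact h m h1
      · exact h' m h1
    have c1 := coeff_pp m hmpos M (fun x hx => ⟨h x hx, hple x (Multiset.mem_add.mpr (Or.inl hx))⟩)
    have c2 := coeff_pp m hmpos M' (fun x hx => ⟨h' x hx, hple x (Multiset.mem_add.mpr (Or.inr hx))⟩)
    rw [hpp, c2] at c1
    have hcount : M.count m = M'.count m := by omega
    have hmM : m ∈ M := by
      rcases Multiset.mem_add.mp hmem with h1 | h1
      · exact h1
      · have := Multiset.count_pos.mpr h1
        exact Multiset.count_pos.mp (by omega)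
    have hmM' : m ∈ M' := by
      have := Multiset.count_pos.mpr hmM
      exact Multiset.count_pos.mp (by omega)
    have eM : M = m ::ₘ M.erase m := (Multiset.cons_erase hmM).symm
    have eM' : M' = m ::ₘ M'.erase m := (Multiset.cons_erase hmM').symm
    have hppe : pp (M.erase m) = pp (M'.erase m) := by
      have hp2 := hpp
      rw [eM, eM', pp_cons, pp_cons] at hp2
      exact mul_left_cancel₀ (one_sub_X_pow_ne_zero m hmpos) hp2
    have hce : Multiset.card (M.erase m) = Multiset.card M - 1 := by
      rw [Multiset.card_erase_of_mem hmM]; rfl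
    have hcard : Multiset.card (M.erase m) ≤ k := by omega
    have hres := ih (M.erase m) (M'.erase m) hcard
      (fun x hx => h x (Multiset.mem_of_mem_erase hx))
      (fun x hx => h' x (Multiset.mem_of_mem_erase hx)) hppe
    rw [eM, eM', hres]

lemma multiset_eq_of_pp (M M' : Multiset ℕ)
    (h : ∀ x ∈ M, 0 < x) (h' : ∀ x ∈ M', 0 < x) (hpp : pp M = pp M') : M = M' :=
  multiset_eq_of_pp_aux (Multiset.card M) M M' le_rfl h h' hpp

end mult

section perm
open PowerSeries

lemma gen_perm_subset (a a' : ℕ → ℕ) (g : ℕ) (σ : Equiv.Perm (Fin (g + 1)))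
    (h : ∀ i : Fin (g + 1), a' i.val = a (σ i).val) : gen a' g ⊆ gen a g := by
  rintro s ⟨c, rfl⟩
  refine ⟨fun j => if hj : j < g + 1 then c (σ.symm ⟨j, hj⟩).val else 0, ?_⟩
  rw [← Fin.sum_univ_eq_sum_range (fun j => c j * a' j) (g + 1)]
  rw [← Fin.sum_univ_eq_sum_range
    (fun j => (if hj : j < g + 1 then c (σ.symm ⟨j, hj⟩).val else 0) * a j) (g + 1)]
  have step1 : ∀ j : Fin (g + 1), c j.val * a' j.val = c j.val * a (σ j).val := fun j => by
    rw [h j]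
  rw [Finset.sum_congr rfl (fun j _ => step1 j)]
  have step2 := Equiv.sum_comp σ (fun j : Fin (g + 1) => c (σ.symm j).val * a j.val)
  simp only [Equiv.symm_apply_apply] at step2
  rw [step2]
  exact Finset.sum_congr rfl fun j _ => by rw [dif_pos j.isLt]

lemma gen_perm_eq (a a' : ℕ → ℕ) (g : ℕ) (σ : Equiv.Perm (Fin (g + 1)))
    (h : ∀ i : Fin (g + 1), a' i.val = a (σ i).val) : gen a' g = gen a g := by
  refine Set.Subset.antisymm (gen_perm_subset a a' g σ h) (gen_perm_subset a' a g σ.symm ?_)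
  intro i
  rw [h (σ.symm i), Equiv.apply_symm_apply]

lemma prod_perm (a a' : ℕ → ℕ) (g : ℕ) (σ : Equiv.Perm (Fin (g + 1)))
    (h : ∀ i : Fin (g + 1), a' i.val = a (σ i).val) :
    ∏ i ∈ Finset.range (g + 1), (1 - (X : PowerSeries ℤ) ^ (a' i)) =
      ∏ i ∈ Finset.range (g + 1), (1 - (X : PowerSeries ℤ) ^ (a i)) := by
  rw [← Fin.prod_univ_eq_prod_range (fun i => 1 - (X : PowerSeries ℤ) ^ (a' i)) (g + 1)]
  rw [← Fin.prod_univ_eq_prod_range (fun i => 1 - (X : PowerSeries ℤ) ^ (a i)) (g + 1)]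
  rw [← Equiv.prod_comp σ (fun i : Fin (g + 1) => 1 - (X : PowerSeries ℤ) ^ (a i.val))]
  exact Finset.prod_congr rfl fun i _ => by rw [← h i]

end perm

open PowerSeries in
theorem stmt_6 (g : ℕ) (a a' : ℕ → ℕ) (hpos : ∀ i, i ≤ g → 0 < a i)
    (hperm : ∃ σ : Equiv.Perm (Fin (g + 1)), ∀ i : Fin (g + 1), a' i.val = a (σ i).val)
    (hfree : IsFreeArr a g) (hfree' : IsFreeArr a' g) :
    Multiset.map (fun i => nSeq a i * a i) (Finset.Icc 1 g).val =
      Multiset.map (fun i => nSeq a' i * a' i) (Finset.Icc 1 g).val := by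
  obtain ⟨σ, hσ⟩ := hperm
  obtain ⟨-, hf⟩ := hfree
  obtain ⟨-, hf'⟩ := hfree'
  have hpos' : ∀ i, i ≤ g → 0 < a' i := by
    intro i hi
    rw [hσ ⟨i, by omega⟩]
    exact hpos _ (Nat.lt_succ_iff.mp (σ ⟨i, by omega⟩).isLt)
  have id1 := main_identity a g hpos hf
  have id2 := main_identity a' g hpos' hf'
  have hFs : Fs a g = Fs a' g := by
    unfold Fs
    rw [gen_perm_eq a a' g σ hσ]
  have hD := prod_perm a a' g σ hσ
  have hP : (∏ i ∈ Finset.Icc 1 g, (1 - (X : PowerSeries ℤ) ^ (nSeq a i * a i))) =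
      ∏ i ∈ Finset.Icc 1 g, (1 - (X : PowerSeries ℤ) ^ (nSeq a' i * a' i)) := by
    rw [← id1, ← id2, hFs, hD]
  have hpp : pp (Multiset.map (fun i => nSeq a i * a i) (Finset.Icc 1 g).val) =
      pp (Multiset.map (fun i => nSeq a' i * a' i) (Finset.Icc 1 g).val) := by
    unfold pp
    rw [Multiset.map_map, Multiset.map_map]
    exact hP
  refine multiset_eq_of_pp _ _ ?_ ?_ hpp
  · intro x hx
    obtain ⟨i, hi, rfl⟩ := Multiset.mem_map.mp hx
    have hi' := Finset.mem_Icc.mp (Finset.mem_val.mp hi)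
    obtain ⟨j, rfl⟩ : ∃ j, i = j + 1 := ⟨i - 1, by omega⟩
    exact Nat.mul_pos (nSeq_pos a (hpos 0 (by omega)) j) (hpos _ (by omega))
  · intro x hx
    obtain ⟨i, hi, rfl⟩ := Multiset.mem_map.mp hx
    have hi' := Finset.mem_Icc.mp (Finset.mem_val.mp hi)
    obtain ⟨j, rfl⟩ : ∃ j, i = j + 1 := ⟨i - 1, by omega⟩
    exact Nat.mul_pos (nSeq_pos a' (hpos' 0 (by omega)) j) (hpos' _ (by omega))
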